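/- Let k, ℓ be nonzero integers, and suppose α : [0, π/2] → [0, π] is continuous, C² on (0, π/2), satisfies α(0) = 0, α(π/2) = π, and on (0, π/2) satisfies [α″(s)·sin α(s) + α′(s)²·cos α(s)]·(k²/cos²s + ℓ²/sin²s) + α′(s)·sin α(s)·(k²/(sin s·cos³s) − ℓ²/(cos s·sin³s)) = 0. Then α is uniquely determined: α(s) = arccos(1 − 2·ln((k²/ℓ²)·sin²s + cos²s)/ln(k²/ℓ²)) if |k| > |ℓ|, and α(s) = 2s if |k| = |ℓ|. -/

import Mathlib

open Real Set

set_option maxHeartbeats 1000000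

private lemma constOnIcc {a b : ℝ} {f : ℝ → ℝ} (hab : a ≤ b)
    (hf : ContinuousOn f (Icc a b))
    (hf' : ∀ x ∈ Ioo a b, HasDerivAt f 0 x) :
    ∀ x ∈ Icc a b, f x = f a := by
  have hdiff : DifferentiableOn ℝ f (interior (Icc a b)) := by
    rw [interior_Icc]
    exact fun x hx => (hf' x hx).differentiableAt.differentiableWithinAt
  have hmono : MonotoneOn f (Icc a b) :=
    monotoneOn_of_deriv_nonneg (convex_Icc a b) hf hdiff (by
      rw [interior_Icc]; intro x hx; simp [(hf' x hx).deriv])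
  have hanti : AntitoneOn f (Icc a b) :=
    antitoneOn_of_deriv_nonpos (convex_Icc a b) hf hdiff (by
      rw [interior_Icc]; intro x hx; simp [(hf' x hx).deriv])
  intro x hx
  exact le_antisymm (hanti (left_mem_Icc.2 hab) hx hx.1) (hmono (left_mem_Icc.2 hab) hx hx.1)

/-- Uniqueness of solutions of the reduced σ₂-criticality ODE with the
boundary conditions `α(0) = 0`, `α(π/2) = π`: any continuous `α : [0, π/2] → [0, π]`,
C² on `(0, π/2)`, satisfying the bracketed ODE on `(0, π/2)` must equal the arccos
formula if `|k| > |l|`, and `α(s) = 2s` if `|k| = |l|`. -/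
theorem stmt_8 (k l : ℤ) (hk : k ≠ 0) (hl : l ≠ 0) (α : ℝ → ℝ)
    (hcont : ContinuousOn α (Icc 0 (π/2)))
    (hmaps : MapsTo α (Icc 0 (π/2)) (Icc 0 π))
    (hC2 : ContDiffOn ℝ 2 α (Ioo 0 (π/2)))
    (h0 : α 0 = 0) (h1 : α (π/2) = π)
    (hode : ∀ s ∈ Ioo 0 (π/2),
      (deriv (deriv α) s * sin (α s) + (deriv α s)^2 * cos (α s)) *
        ((k : ℝ)^2 / cos s ^ 2 + (l : ℝ)^2 / sin s ^ 2) +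
      deriv α s * sin (α s) *
        ((k : ℝ)^2 / (sin s * cos s ^ 3) - (l : ℝ)^2 / (cos s * sin s ^ 3)) = 0) :
    (|k| > |l| → ∀ s ∈ Icc (0:ℝ) (π/2),
      α s = arccos (1 - 2 * Real.log (((k : ℝ)^2 / (l : ℝ)^2) * sin s ^ 2 + cos s ^ 2)
        / Real.log ((k : ℝ)^2 / (l : ℝ)^2))) ∧
    (|k| = |l| → ∀ s ∈ Icc (0:ℝ) (π/2), α s = 2 * s) := by
  have hπ : (0:ℝ) < π/2 := by linarith [pi_pos]
  set K := (k:ℝ)^2 with hKdef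
  set L := (l:ℝ)^2 with hLdef
  have hK1 : (1:ℝ) ≤ K := by
    have h1 : (1:ℝ) ≤ |(k:ℝ)| := by
      rw [← Int.cast_abs]; exact_mod_cast Int.one_le_abs hk
    nlinarith [sq_abs (k:ℝ)]
  have hL1 : (1:ℝ) ≤ L := by
    have h1 : (1:ℝ) ≤ |(l:ℝ)| := by
      rw [← Int.cast_abs]; exact_mod_cast Int.one_le_abs hl
    nlinarith [sq_abs (l:ℝ)]
  have hKpos : (0:ℝ) < K := by linarith
  have hLpos : (0:ℝ) < L := by linarith
  have hsin : ∀ s ∈ Ioo (0:ℝ) (π/2), 0 < sin s := fun s hs =>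
    sin_pos_of_pos_of_lt_pi hs.1 (hs.2.trans (by linarith [pi_pos]))
  have hcos : ∀ s ∈ Ioo (0:ℝ) (π/2), 0 < cos s := fun s hs =>
    cos_pos_of_mem_Ioo ⟨by linarith [hs.1], hs.2⟩
  have hα1 : ∀ s ∈ Ioo (0:ℝ) (π/2), HasDerivAt α (deriv α s) s := by
    intro s hs
    exact ((hC2.differentiableOn (by norm_num)).differentiableAt
      (isOpen_Ioo.mem_nhds hs)).hasDerivAt
  have hC1d : ContDiffOn ℝ 1 (deriv α) (Ioo (0:ℝ) (π/2)) :=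
    hC2.deriv_of_isOpen isOpen_Ioo (by norm_num)
  have hα2 : ∀ s ∈ Ioo (0:ℝ) (π/2), HasDerivAt (deriv α) (deriv (deriv α) s) s := fun s hs =>
    ((hC1d.differentiableOn (by norm_num)).differentiableAt (isOpen_Ioo.mem_nhds hs)).hasDerivAt
  set P : ℝ → ℝ := fun s => K * sin s ^ 2 + L * cos s ^ 2 with hP
  have hPpos : ∀ s, 0 < P s := by
    intro s
    have h := Real.sin_sq_add_cos_sq s
    simp only [hP]
    nlinarith [sq_nonneg (Real.sin s), sq_nonneg (Real.cos s)]
  have hPd : ∀ s, HasDerivAt P (2*(K-L)*sin s*cos s) s := by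
    intro s
    have h1 : HasDerivAt (fun t => sin t ^ 2) (2 * sin s ^ 1 * cos s) s := by
      simpa using (Real.hasDerivAt_sin s).fun_pow 2
    have h2 : HasDerivAt (fun t => cos t ^ 2) (2 * cos s ^ 1 * (-sin s)) s := by
      simpa using (Real.hasDerivAt_cos s).fun_pow 2
    have := (h1.const_mul K).add (h2.const_mul L)
    exact this.congr_deriv (by ring)
  have hPc : Continuous P := by rw [hP]; continuity
  set g : ℝ → ℝ := fun s => deriv α s * sin (α s) * (P s / (sin s * cos s)) with hg
  have hgd : ∀ s ∈ Ioo (0:ℝ) (π/2), HasDerivAt g 0 s := by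
    intro s hs
    have hs0 := (hsin s hs).ne'
    have hc0 := (hcos s hs).ne'
    have hscne : sin s * cos s ≠ 0 := mul_ne_zero hs0 hc0
    have hd1 : HasDerivAt (fun t => deriv α t * sin (α t))
        (deriv (deriv α) s * sin (α s) + deriv α s * (cos (α s) * deriv α s)) s :=
      (hα2 s hs).mul ((Real.hasDerivAt_sin (α s)).comp s (hα1 s hs))
    have hdW : HasDerivAt (fun t => P t / (sin t * cos t))
        ((2*(K-L)*sin s*cos s * (sin s * cos s) - P s * (cos s * cos s + sin s * (-sin s)))
          / (sin s * cos s)^2) s :=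
      (hPd s).div ((Real.hasDerivAt_sin s).mul (Real.hasDerivAt_cos s)) hscne
    have hgds : HasDerivAt g
        ((deriv (deriv α) s * sin (α s) + deriv α s * (cos (α s) * deriv α s)) *
            (P s / (sin s * cos s)) +
          deriv α s * sin (α s) *
            ((2*(K-L)*sin s*cos s * (sin s * cos s) - P s * (cos s * cos s + sin s * (-sin s)))
              / (sin s * cos s)^2)) s := hd1.mul hdW
    have hpy := Real.sin_sq_add_cos_sq s
    have hodes := hode s hs
    set A := deriv α s
    set B := deriv (deriv α) s
    set S := Real.sin (α s)
    set C := Real.cos (α s)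
    set si := Real.sin s
    set co := Real.cos s
    have hkey : (B * S + A^2 * C) * (K * si^2 + L * co^2) * (si * co) + A * S * (K * si^2 - L * co^2) = 0 := by
      have h : (B * S + A^2 * C) * (K * si^2 + L * co^2) * (si * co) + A * S * (K * si^2 - L * co^2)
          = ((B * S + A^2 * C) * (K / co^2 + L / si^2) + A * S * (K / (si * co^3) - L / (co * si^3)))
            * (si^3 * co^3) := by
        field_simp
      rw [h, hodes, zero_mul]
    have hE : (B * S + A * (C * A)) * (P s / (si * co)) +
        A * S * ((2*(K-L)*si*co * (si * co) - P s * (co * co + si * (-si))) / (si * co)^2)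
        = ((B * S + A^2 * C) * (K * si^2 + L * co^2) * (si * co) + A * S * (K * si^2 - L * co^2))
          / (si^2 * co^2) := by
      have hN : (2*(K-L)*si*co * (si * co) - P s * (co * co + si * (-si))) = K * si^2 - L * co^2 := by
        simp only [hP]
        linear_combination (K*si^2 - L*co^2) * hpy
      rw [hN]
      field_simp
      simp only [hP]
      ring
    rw [hE, hkey, zero_div] at hgds
    exact hgds
  have hq1 : π/4 ∈ Ioo (0:ℝ) (π/2) := ⟨by linarith [pi_pos], by linarith [pi_pos]⟩
  set c := g (π/4) with hcdef
  have hgc : ∀ s ∈ Ioo (0:ℝ) (π/2), g s = c := by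
    intro s hs
    rcases le_total s (π/4) with h | h
    · have hsub : Icc s (π/4) ⊆ Ioo (0:ℝ) (π/2) :=
        fun x hx => ⟨lt_of_lt_of_le hs.1 hx.1, lt_of_le_of_lt hx.2 hq1.2⟩
      exact (constOnIcc h (fun x hx => ((hgd x (hsub hx)).continuousAt).continuousWithinAt)
        (fun x hx => hgd x (hsub (Ioo_subset_Icc_self hx))) (π/4) (right_mem_Icc.2 h)).symm
    · have hsub : Icc (π/4) s ⊆ Ioo (0:ℝ) (π/2) :=
        fun x hx => ⟨lt_of_lt_of_le hq1.1 hx.1, lt_of_le_of_lt hx.2 hs.2⟩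
      exact constOnIcc h (fun x hx => ((hgd x (hsub hx)).continuousAt).continuousWithinAt)
        (fun x hx => hgd x (hsub (Ioo_subset_Icc_self hx))) s (right_mem_Icc.2 h)
  have hA1 : ∀ s ∈ Ioo (0:ℝ) (π/2),
      deriv α s * sin (α s) = c * (sin s * cos s) / P s := by
    intro s hs
    have h := hgc s hs
    simp only [hg] at h
    have hPne := (hPpos s).ne'
    have hs0 := (hsin s hs).ne'
    have hc0 := (hcos s hs).ne'
    field_simp at h ⊢
    linear_combination h
  have hP0 : P 0 = L := by simp [hP]
  have hPh : P (π/2) = K := by simp [hP]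
  constructor
  · -- case |k| > |l|
    intro hkl s hsIcc
    have habs : |(l:ℝ)| < |(k:ℝ)| := by
      rw [← Int.cast_abs, ← Int.cast_abs]; exact_mod_cast hkl
    have hKL : L < K := by
      rw [hKdef, hLdef, ← sq_abs (k:ℝ), ← sq_abs (l:ℝ)]
      nlinarith [abs_nonneg (l:ℝ)]
    have hΔ : (0:ℝ) < K - L := by linarith
    have hΔne : K - L ≠ 0 := ne_of_gt hΔ
    have hlog : Real.log L < Real.log K := Real.log_lt_log hLpos hKL
    have hDpos : (0:ℝ) < Real.log K - Real.log L := by linarith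
    have hDne : Real.log K - Real.log L ≠ 0 := ne_of_gt hDpos
    set φ : ℝ → ℝ := fun t => -cos (α t) - c * Real.log (P t) / (2*(K-L)) with hφ
    have hφcont : ContinuousOn φ (Icc 0 (π/2)) := by
      apply ContinuousOn.sub
      · exact (Real.continuous_cos.comp_continuousOn hcont).neg
      · exact (continuousOn_const.mul
          ((hPc.continuousOn).log (fun x _ => (hPpos x).ne'))).div_const _
    have hφd : ∀ t ∈ Ioo (0:ℝ) (π/2), HasDerivAt φ 0 t := by
      intro t ht
      have h1 : HasDerivAt (fun y => -cos (α y)) (-(-sin (α t) * deriv α t)) t :=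
        ((Real.hasDerivAt_cos (α t)).comp t (hα1 t ht)).neg
      have h2 : HasDerivAt (fun y => c * Real.log (P y) / (2*(K-L)))
          (c * (2*(K-L)*sin t*cos t / P t) / (2*(K-L))) t :=
        (((hPd t).log (hPpos t).ne').const_mul c).div_const _
      have h3 := h1.sub h2
      have hval : -(-sin (α t) * deriv α t) - c * (2*(K-L)*sin t*cos t / P t) / (2*(K-L)) = 0 := by
        have hA := hA1 t ht
        have hPne := (hPpos t).ne'
        have e : c * (2*(K-L)*sin t*cos t / P t) / (2*(K-L)) = c * (sin t * cos t) / P t := by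
          rw [div_eq_iff (mul_ne_zero two_ne_zero hΔne)]
          ring
        rw [e, ← hA]
        ring
      rw [hval] at h3
      exact h3
    have hφconst := constOnIcc hπ.le hφcont hφd
    have e2 := hφconst (π/2) (right_mem_Icc.2 hπ.le)
    simp only [hφ] at e2
    rw [h0, h1, hP0, hPh, Real.cos_pi, Real.cos_zero] at e2
    have hcD : c * (Real.log K - Real.log L) = 4*(K-L) := by
      field_simp at e2
      linarith
    have e3 := hφconst s hsIcc
    simp only [hφ] at e3
    rw [h0, hP0, Real.cos_zero] at e3
    have hcosval : cos (α s)
        = 1 - 2*(Real.log (P s) - Real.log L)/(Real.log K - Real.log L) := by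
      field_simp at e3
      have h4 : (cos (α s) - 1) * (Real.log K - Real.log L) * (2*(K-L))
          = -(2*(Real.log (P s) - Real.log L)) * (2*(K-L)) := by
        linear_combination (-(Real.log K - Real.log L)) * e3
          - (Real.log (P s) - Real.log L) * hcD
      have hXD := mul_right_cancel₀ (by positivity : (2:ℝ)*(K-L) ≠ 0) h4
      have h5 : 2*(Real.log (P s) - Real.log L)/(Real.log K - Real.log L) = 1 - cos (α s) := by
        rw [div_eq_iff hDne]
        linear_combination hXD
      linarith [h5]
    have harg : K / L * sin s ^ 2 + cos s ^ 2 = P s / L := by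
      simp only [hP]
      field_simp
    rw [harg, Real.log_div (hPpos s).ne' (ne_of_gt hLpos),
      Real.log_div (ne_of_gt hKpos) (ne_of_gt hLpos), ← hcosval]
    exact (Real.arccos_cos (hmaps hsIcc).1 (hmaps hsIcc).2).symm
  · -- case |k| = |l|
    intro hkl s hsIcc
    have habs : |(k:ℝ)| = |(l:ℝ)| := by
      rw [← Int.cast_abs, ← Int.cast_abs]; exact_mod_cast hkl
    have hKL : K = L := by
      rw [hKdef, hLdef, ← sq_abs (k:ℝ), ← sq_abs (l:ℝ), habs]
    have hKne : K ≠ 0 := ne_of_gt hKpos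
    have hPconst : ∀ t, P t = K := by
      intro t
      simp only [hP]
      linear_combination K * Real.sin_sq_add_cos_sq t - (cos t)^2 * hKL
    set ψ : ℝ → ℝ := fun t => -cos (α t) + c * cos (2*t) / (4*K) with hψ
    have hψcont : ContinuousOn ψ (Icc 0 (π/2)) := by
      apply ContinuousOn.add
      · exact (Real.continuous_cos.comp_continuousOn hcont).neg
      · exact ((continuous_const.mul (Real.continuous_cos.comp
          (continuous_const.mul continuous_id))).div_const _).continuousOn
    have hψd : ∀ t ∈ Ioo (0:ℝ) (π/2), HasDerivAt ψ 0 t := by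
      intro t ht
      have h1 : HasDerivAt (fun y => -cos (α y)) (-(-sin (α t) * deriv α t)) t :=
        ((Real.hasDerivAt_cos (α t)).comp t (hα1 t ht)).neg
      have h2 : HasDerivAt (fun y => c * cos (2*y) / (4*K))
          (c * (-sin (2*t) * (2*1)) / (4*K)) t :=
        ((((Real.hasDerivAt_cos (2*t)).comp t ((hasDerivAt_id t).const_mul 2))).const_mul c).div_const _
      have h3 := h1.add h2
      have hval : -(-sin (α t) * deriv α t) + c * (-sin (2*t) * (2*1)) / (4*K) = 0 := by
        have hA := hA1 t ht
        rw [hPconst t] at hA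
        rw [Real.sin_two_mul]
        field_simp at hA ⊢
        linear_combination 4 * hA
      rw [hval] at h3
      exact h3
    have hψconst := constOnIcc hπ.le hψcont hψd
    have e2 := hψconst (π/2) (right_mem_Icc.2 hπ.le)
    simp only [hψ] at e2
    rw [h0, h1, Real.cos_pi, Real.cos_zero, show (2:ℝ)*(π/2) = π by ring, Real.cos_pi,
      mul_zero, Real.cos_zero] at e2
    have hc4 : c = 4*K := by
      field_simp at e2
      linarith
    have e3 := hψconst s hsIcc
    simp only [hψ] at e3
    rw [h0, Real.cos_zero, mul_zero, Real.cos_zero] at e3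
    have hcoseq : cos (α s) = cos (2*s) := by
      rw [hc4] at e3
      field_simp at e3
      linarith
    calc α s = arccos (cos (α s)) := (Real.arccos_cos (hmaps hsIcc).1 (hmaps hsIcc).2).symm
      _ = arccos (cos (2*s)) := by rw [hcoseq]
      _ = 2*s := Real.arccos_cos (by linarith [hsIcc.1]) (by linarith [hsIcc.2])
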